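/- arXiv:1701.04987 — 2 statements merged into one kernel-verified Lean document; each statement's English description precedes it below -/
import Mathlib

section
/- Let D_n, D be self-adjoint operators on a separable Hilbert space H. If for every f in dom(D) there exists f_n ∈ dom(D_n) with (f_n, D_n f_n) → (f, D f) in H × H, then the orthogonal projections P_n onto the graphs of D_n converge in the strong operator topology to the orthogonal projection P onto the graph of D. -/
open Filter Topology

variable {H : Type*} [NormedAddCommGroup H] [InnerProductSpace ℂ H] [CompleteSpace H]
  [TopologicalSpace.SeparableSpace H]

/-- The graph of a `LinearPMap`, viewed as a submodule of the Hilbert space `H ×₂ H`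
(the product equipped with the `L²` inner product). -/
noncomputable def graphL2 (D : H →ₗ.[ℂ] H) : Submodule ℂ (WithLp 2 (H × H)) :=
  D.graph.comap (WithLp.linearEquiv 2 ℂ (H × H)).toLinearMap

/-- `P` is the orthogonal projection of `H ×₂ H` onto the subspace `K`. -/
def IsOrthProjOnto (K : Submodule ℂ (WithLp 2 (H × H)))
    (P : WithLp 2 (H × H) → WithLp 2 (H × H)) : Prop :=
  ∀ x, P x ∈ K ∧ x - P x ∈ Kᗮ

section Aux

set_option linter.unusedSectionVars false

local notation "⟪" x ", " y "⟫" => @inner ℂ _ _ x y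

lemma wl_ext {a b : WithLp 2 (H × H)} (h1 : a.fst = b.fst) (h2 : a.snd = b.snd) : a = b :=
  (WithLp.equiv 2 _).injective (Prod.ext h1 h2)

lemma mem_graphL2_iff {D : H →ₗ.[ℂ] H} {x : WithLp 2 (H × H)} :
    x ∈ graphL2 D ↔ ∃ hx : x.fst ∈ D.domain, D ⟨x.fst, hx⟩ = x.snd := by
  simp only [graphL2, Submodule.mem_comap, LinearEquiv.coe_coe, WithLp.linearEquiv_apply,
    LinearPMap.mem_graph_iff]
  constructor
  · rintro ⟨y, h1, h2⟩
    exact ⟨(show (y : H) = x.fst from h1) ▸ y.2, by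
      rw [show (⟨x.fst, (show (y : H) = x.fst from h1) ▸ y.2⟩ : D.domain) = y from
        Subtype.ext h1.symm]; exact h2⟩
  · rintro ⟨hx, h⟩
    exact ⟨⟨x.fst, hx⟩, rfl, h⟩

/-- The "multiplication by i"-like unitary `(f, g) ↦ (-g, f)` on `H ×₂ H`. -/
noncomputable def Jmap : WithLp 2 (H × H) →ₗ[ℂ] WithLp 2 (H × H) where
  toFun x := (WithLp.equiv 2 (H × H)).symm (-(x.snd), x.fst)
  map_add' x y := wl_ext (by simp [neg_add, add_comm]) (by simp)
  map_smul' c x := wl_ext (by simp) (by simp)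

lemma Jmap_fst (x : WithLp 2 (H × H)) : (Jmap x).fst = -(x.snd) := rfl
lemma Jmap_snd (x : WithLp 2 (H × H)) : (Jmap x).snd = x.fst := rfl

lemma norm_Jmap (x : WithLp 2 (H × H)) : ‖Jmap x‖ = ‖x‖ := by
  rw [WithLp.prod_norm_eq_of_L2, WithLp.prod_norm_eq_of_L2, Jmap_fst, Jmap_snd, norm_neg, add_comm]

lemma tendsto_Jmap {f : ℕ → WithLp 2 (H × H)} {a : WithLp 2 (H × H)}
    (h : Tendsto f atTop (𝓝 a)) : Tendsto (fun n => Jmap (f n)) atTop (𝓝 (Jmap a)) := by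
  rw [tendsto_iff_norm_sub_tendsto_zero] at h ⊢
  simpa only [← map_sub, norm_Jmap] using h

/-- Formal self-adjointness of a self-adjoint `LinearPMap`. -/
lemma selfAdjoint_inner_symm {A : H →ₗ.[ℂ] H} (hA : IsSelfAdjoint A)
    (f g : A.domain) : ⟪A f, (g : H)⟫ = ⟪(f : H), A g⟫ := by
  have hd := hA.dense_domain
  have h := LinearPMap.adjoint_isFormalAdjoint hd
  rw [LinearPMap.isSelfAdjoint_def] at hA
  rw [hA] at h
  exact h f g

/-- Characterization of the orthogonal complement of the graph of a self-adjoint operator. -/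
lemma mem_orth_graphL2_iff {A : H →ₗ.[ℂ] H} (hA : IsSelfAdjoint A) {x : WithLp 2 (H × H)} :
    x ∈ (graphL2 A)ᗮ ↔ ∃ hx : x.snd ∈ A.domain, x.fst = -(A ⟨x.snd, hx⟩) := by
  have hd := hA.dense_domain
  constructor
  · intro h
    rw [Submodule.mem_orthogonal] at h
    have key : ∀ v : A.domain, ⟪(v : H), x.fst⟫ + ⟪A v, x.snd⟫ = 0 := by
      intro v
      have hv : ((WithLp.equiv 2 (H × H)).symm ((v : H), A v)) ∈ graphL2 A :=
        mem_graphL2_iff.mpr ⟨v.2, by simp⟩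
      have := h _ hv
      simpa [WithLp.prod_inner_apply] using this
    have key' : ∀ v : A.domain, ⟪-x.fst, (v : H)⟫ = ⟪x.snd, A v⟫ := by
      intro v
      have h0 : ⟪A v, x.snd⟫ = -⟪(v : H), x.fst⟫ := by linear_combination key v
      rw [← inner_conj_symm x.snd ((A v : H)), h0, map_neg, inner_conj_symm, inner_neg_left]
    have hmem : x.snd ∈ A.adjoint.domain :=
      LinearPMap.mem_adjoint_domain_of_exists _ ⟨-x.fst, key'⟩
    have hval : A.adjoint ⟨x.snd, hmem⟩ = -x.fst :=
      LinearPMap.adjoint_apply_eq hd _ fun v => key' v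
    have hg : (x.snd, -x.fst) ∈ A.adjoint.graph := by
      have := A.adjoint.mem_graph ⟨x.snd, hmem⟩
      rwa [hval] at this
    rw [LinearPMap.isSelfAdjoint_def] at hA
    rw [hA] at hg
    rw [LinearPMap.mem_graph_iff] at hg
    obtain ⟨y, hy1, hy2⟩ := hg
    have hy1' : (y : H) = x.snd := hy1
    refine ⟨hy1' ▸ y.2, ?_⟩
    rw [show (⟨x.snd, hy1' ▸ y.2⟩ : A.domain) = y from Subtype.ext hy1'.symm, hy2, neg_neg]
  · rintro ⟨hx, heq⟩
    rw [Submodule.mem_orthogonal]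
    intro u hu
    obtain ⟨hf, hAf⟩ := mem_graphL2_iff.mp hu
    rw [WithLp.prod_inner_apply]
    change ⟪u.fst, x.fst⟫ + ⟪u.snd, x.snd⟫ = 0
    rw [heq, ← hAf, inner_neg_right,
      selfAdjoint_inner_symm hA ⟨u.fst, hf⟩ ⟨x.snd, hx⟩]
    ring

/-- Uniqueness of the orthogonal decomposition. -/
lemma proj_unique {K : Submodule ℂ (WithLp 2 (H × H))} {x y z : WithLp 2 (H × H)}
    (hy : y ∈ K) (hy' : x - y ∈ Kᗮ) (hz : z ∈ K) (hz' : x - z ∈ Kᗮ) : y = z := by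
  have h1 : y - z ∈ K := K.sub_mem hy hz
  have h2 : y - z ∈ Kᗮ := by
    have := Kᗮ.sub_mem hz' hy'
    simpa [sub_sub_sub_cancel_left] using this
  have := Submodule.disjoint_def.mp K.orthogonal_disjoint _ h1 h2
  exact sub_eq_zero.mp this

end Aux

/-- If for every `f ∈ dom D` there is a sequence `fₙ ∈ dom Dₙ` with
`(fₙ, Dₙ fₙ) → (f, D f)`, then the orthogonal projections onto the graphs of the
self-adjoint operators `Dₙ` converge strongly to the orthogonal projection onto the
graph of `D`. -/
theorem graph_projections_strongly_converge
    (D : H →ₗ.[ℂ] H) (Dn : ℕ → H →ₗ.[ℂ] H)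
    (hD : IsSelfAdjoint D) (hDn : ∀ n, IsSelfAdjoint (Dn n))
    (P : WithLp 2 (H × H) → WithLp 2 (H × H))
    (Pn : ℕ → WithLp 2 (H × H) → WithLp 2 (H × H))
    (hP : IsOrthProjOnto (graphL2 D) P)
    (hPn : ∀ n, IsOrthProjOnto (graphL2 (Dn n)) (Pn n))
    (happrox : ∀ f : H, ∀ hf : f ∈ D.domain,
      ∃ (fn : ℕ → H) (hfn : ∀ n, fn n ∈ (Dn n).domain),
        Tendsto fn atTop (𝓝 f) ∧
        Tendsto (fun n => (Dn n) ⟨fn n, hfn n⟩) atTop (𝓝 (D ⟨f, hf⟩))) :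
    ∀ x, Tendsto (fun n => Pn n x) atTop (𝓝 (P x)) := by
  -- Part 1: convergence on the graph of D
  have part1 : ∀ u ∈ graphL2 D, Tendsto (fun n => Pn n u) atTop (𝓝 u) := by
    intro u hu
    obtain ⟨hf, hDf⟩ := mem_graphL2_iff.mp hu
    obtain ⟨fn, hfn, h1, h2⟩ := happrox u.fst hf
    set w : ℕ → WithLp 2 (H × H) :=
      fun n => (WithLp.equiv 2 (H × H)).symm (fn n, (Dn n) ⟨fn n, hfn n⟩) with hw
    have hwmem : ∀ n, w n ∈ graphL2 (Dn n) := fun n => mem_graphL2_iff.mpr ⟨hfn n, by simp [hw]⟩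
    have hwto : Tendsto w atTop (𝓝 u) := by
      rw [hDf] at h2
      have : Tendsto (fun n => (fn n, (Dn n) ⟨fn n, hfn n⟩)) atTop (𝓝 (u.fst, u.snd)) :=
        h1.prodMk_nhds h2
      have hcont := ((WithLp.prodContinuousLinearEquiv 2 ℂ H H).symm.continuous.tendsto
        (u.fst, u.snd)).comp this
      have heqq : (WithLp.prodContinuousLinearEquiv 2 ℂ H H).symm (u.fst, u.snd) = u :=
        wl_ext rfl rfl
      rw [heqq] at hcont
      exact hcont
    -- Pythagoras : ‖u - Pn n u‖ ≤ ‖u - w n‖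
    have hbound : ∀ n, ‖u - Pn n u‖ ≤ ‖u - w n‖ := by
      intro n
      obtain ⟨hm, hm'⟩ := hPn n u
      have horth : (inner (𝕜 := ℂ) (u - Pn n u) (Pn n u - w n)) = 0 := by
        rw [← inner_conj_symm]
        rw [(Submodule.mem_orthogonal _ _).mp hm' _ (((graphL2 (Dn n)).sub_mem hm (hwmem n)))]
        simp
      have hsq : ‖u - w n‖ * ‖u - w n‖
          = ‖u - Pn n u‖ * ‖u - Pn n u‖ + ‖Pn n u - w n‖ * ‖Pn n u - w n‖ := by
        have hd : u - w n = (u - Pn n u) + (Pn n u - w n) := by abel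
        rw [hd, norm_add_sq_eq_norm_sq_add_norm_sq_of_inner_eq_zero _ _ horth]
      nlinarith [norm_nonneg (u - Pn n u), norm_nonneg (u - w n), norm_nonneg (Pn n u - w n)]
    rw [tendsto_iff_norm_sub_tendsto_zero]
    have hto0 : Tendsto (fun n => ‖u - w n‖) atTop (𝓝 0) := by
      rw [tendsto_iff_norm_sub_tendsto_zero] at hwto
      simpa [norm_sub_rev] using hwto
    refine squeeze_zero (fun n => norm_nonneg _) (fun n => ?_) hto0
    rw [norm_sub_rev]; exact hbound n
  -- Part 2: convergence to 0 on the orthogonal complement of the graph of D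
  have part2 : ∀ v ∈ (graphL2 D)ᗮ, Tendsto (fun n => Pn n v) atTop (𝓝 0) := by
    intro v hv
    obtain ⟨hg, hval⟩ := (mem_orth_graphL2_iff hD).mp hv
    set u : WithLp 2 (H × H) := (WithLp.equiv 2 (H × H)).symm (v.snd, D ⟨v.snd, hg⟩) with hu
    have humem : u ∈ graphL2 D := mem_graphL2_iff.mpr ⟨hg, by simp [hu]⟩
    have hJu : Jmap u = v := by
      refine wl_ext ?_ ?_
      · rw [Jmap_fst, hval]; simp [hu]
      · rw [Jmap_snd]; simp [hu]
    -- identify Pn n v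
    have hkey : ∀ n, Pn n v = Jmap u - Jmap (Pn n u) := by
      intro n
      obtain ⟨hm, hm'⟩ := hPn n u
      have hy1 : Jmap u - Jmap (Pn n u) ∈ graphL2 (Dn n) := by
        have heq : Jmap u - Jmap (Pn n u) = Jmap (u - Pn n u) := by rw [map_sub]
        rw [heq]
        obtain ⟨hs, hs'⟩ := (mem_orth_graphL2_iff (hDn n)).mp hm'
        refine mem_graphL2_iff.mpr ⟨?_, ?_⟩
        · rw [Jmap_fst]; exact (Dn n).domain.neg_mem hs
        · have e1 : (⟨(Jmap (u - Pn n u)).fst,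
              ((Dn n).domain.neg_mem hs : (Jmap (u - Pn n u)).fst ∈ (Dn n).domain)⟩ :
                (Dn n).domain) = -⟨(u - Pn n u).snd, hs⟩ := by
            apply Subtype.ext
            simp only [Submodule.coe_neg]
            exact Jmap_fst _
          rw [e1, LinearPMap.map_neg, Jmap_snd]
          exact hs'.symm
      have hy2 : v - (Jmap u - Jmap (Pn n u)) ∈ (graphL2 (Dn n))ᗮ := by
        have heq : v - (Jmap u - Jmap (Pn n u)) = Jmap (Pn n u) := by rw [hJu]; abel
        rw [heq]
        obtain ⟨hpf, hpv⟩ := mem_graphL2_iff.mp hm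
        refine (mem_orth_graphL2_iff (hDn n)).mpr ⟨?_, ?_⟩
        · rw [Jmap_snd]; exact hpf
        · rw [Jmap_fst, ← hpv]
          rfl
      obtain ⟨hm2, hm2'⟩ := hPn n v
      exact proj_unique hm2 hm2' hy1 hy2
    have : Tendsto (fun n => Jmap u - Jmap (Pn n u)) atTop (𝓝 (Jmap u - Jmap u)) :=
      tendsto_const_nhds.sub (tendsto_Jmap (part1 u humem))
    simp only [sub_self] at this
    exact (Filter.tendsto_congr fun n => (hkey n).symm).mp this
  -- combine
  intro x
  obtain ⟨hPx, hPx'⟩ := hP x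
  have hsplit : ∀ n, Pn n x = Pn n (P x) + Pn n (x - P x) := by
    intro n
    obtain ⟨ha, ha'⟩ := hPn n (P x)
    obtain ⟨hb, hb'⟩ := hPn n (x - P x)
    obtain ⟨hc, hc'⟩ := hPn n x
    refine proj_unique hc hc' ((graphL2 (Dn n)).add_mem ha hb) ?_
    have heq : x - (Pn n (P x) + Pn n (x - P x))
        = (P x - Pn n (P x)) + ((x - P x) - Pn n (x - P x)) := by abel
    rw [heq]
    exact Submodule.add_mem _ ha' hb'
  have h1 := part1 (P x) hPx
  have h2 := part2 (x - P x) hPx'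
  have := h1.add h2
  rw [add_zero] at this
  exact (Filter.tendsto_congr fun n => (hsplit n).symm).mp this
end

section
/- Let D_n, D be self-adjoint operators on a separable Hilbert space H. If the orthogonal projections onto the graphs of D_n converge strongly to the orthogonal projection onto the graph of D, then D_n converges to D in the strong resolvent sense. -/
open Filter Topology

variable {H : Type*} [NormedAddCommGroup H] [InnerProductSpace ℂ H] [CompleteSpace H]
  [TopologicalSpace.SeparableSpace H]

/-- `R` is the resolvent of the (possibly unbounded) operator `D` at the point `i`. -/
def IsResolventAtI (D : H →ₗ.[ℂ] H) (R : H → H) : Prop :=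
  ∀ g : H, ∃ h : R g ∈ D.domain, D ⟨R g, h⟩ - Complex.I • R g = g

set_option linter.unusedSectionVars false in
lemma orthProj_unique {K : Submodule ℂ (WithLp 2 (H × H))}
    {P : WithLp 2 (H × H) → WithLp 2 (H × H)} (hP : IsOrthProjOnto K P)
    {x p : WithLp 2 (H × H)} (hp : p ∈ K) (hxp : x - p ∈ Kᗮ) : P x = p := by
  have h1 : P x - p ∈ K := K.sub_mem (hP x).1 hp
  have h2 : P x - p ∈ Kᗮ := by
    have : (x - p) - (x - P x) = P x - p := by abel
    exact this ▸ Kᗮ.sub_mem hxp (hP x).2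
  have := Submodule.inner_right_of_mem_orthogonal h1 h2
  rw [inner_self_eq_zero, sub_eq_zero] at this
  exact this

lemma key_proj {D : H →ₗ.[ℂ] H} (hD : IsSelfAdjoint D)
    {P : WithLp 2 (H × H) → WithLp 2 (H × H)} (hP : IsOrthProjOnto (graphL2 D) P)
    {R : H → H} (hR : IsResolventAtI D R) (g : H) :
    P ((WithLp.equiv 2 (H × H)).symm (Complex.I • g, g)) =
      (WithLp.equiv 2 (H × H)).symm (R g, g + Complex.I • R g) := by
  obtain ⟨hmem, heq⟩ := hR g
  have hDRg : D ⟨R g, hmem⟩ = g + Complex.I • R g := by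
    exact eq_add_of_sub_eq heq
  -- symmetry
  have hdense := hD.dense_domain
  rw [LinearPMap.isSelfAdjoint_def] at hD
  have hsym : ∀ u w : D.domain, (inner ℂ (D u) (w : H) : ℂ) = inner ℂ (u : H) (D w) := by
    have h := LinearPMap.adjoint_isFormalAdjoint hdense
    rw [hD] at h
    exact h
  apply orthProj_unique hP
  · -- membership in graph
    show (WithLp.linearEquiv 2 ℂ (H × H)).toLinearMap _ ∈ D.graph
    rw [D.mem_graph_iff]
    exact ⟨⟨R g, hmem⟩, by simp [hDRg]⟩
  · -- orthogonality
    intro y hy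
    have hy' : (WithLp.linearEquiv 2 ℂ (H × H)).toLinearMap y ∈ D.graph := hy
    rw [D.mem_graph_iff] at hy'
    obtain ⟨u, hu⟩ := hy'
    rw [WithLp.prod_inner_apply]
    change inner ℂ y.fst (_ : WithLp 2 (H × H)).fst + inner ℂ y.snd (_ : WithLp 2 (H × H)).snd = 0
    have h1 : ((WithLp.equiv 2 (H × H)).symm (Complex.I • g, g) -
        (WithLp.equiv 2 (H × H)).symm (R g, g + Complex.I • R g)).fst
        = Complex.I • g - R g := rfl
    have h2 : ((WithLp.equiv 2 (H × H)).symm (Complex.I • g, g) -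
        (WithLp.equiv 2 (H × H)).symm (R g, g + Complex.I • R g)).snd
        = -(Complex.I • R g) := by
      show g - (g + Complex.I • R g) = _; abel
    have hyf : y.fst = (u : H) := hu.1.symm
    have hys : y.snd = D u := hu.2.symm
    rw [h1, h2, hyf, hys]
    have hDu : (inner ℂ (D u) (R g) : ℂ) = inner ℂ (u : H) (g + Complex.I • R g) := by
      rw [hsym u ⟨R g, hmem⟩, hDRg]
    rw [inner_sub_right, inner_neg_right, inner_smul_right, inner_smul_right, hDu,
      inner_add_right, inner_smul_right]
    ring_nf
    rw [Complex.I_sq]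
    ring

/-- If the orthogonal projections onto the graphs of the self-adjoint operators `Dₙ`
converge strongly to the orthogonal projection onto the graph of the self-adjoint
operator `D`, then `Dₙ → D` in the strong resolvent sense. -/
theorem strong_resolvent_convergence_of_graph_projection_convergence
    (D : H →ₗ.[ℂ] H) (Dn : ℕ → H →ₗ.[ℂ] H)
    (hD : IsSelfAdjoint D) (hDn : ∀ n, IsSelfAdjoint (Dn n))
    (P : WithLp 2 (H × H) → WithLp 2 (H × H))
    (Pn : ℕ → WithLp 2 (H × H) → WithLp 2 (H × H))
    (hP : IsOrthProjOnto (graphL2 D) P)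
    (hPn : ∀ n, IsOrthProjOnto (graphL2 (Dn n)) (Pn n))
    (hproj : ∀ x, Tendsto (fun n => Pn n x) atTop (𝓝 (P x)))
    (R : H → H) (Rn : ℕ → H → H)
    (hR : IsResolventAtI D R) (hRn : ∀ n, IsResolventAtI (Dn n) (Rn n)) :
    ∀ g : H, Tendsto (fun n => Rn n g) atTop (𝓝 (R g)) := by
  intro g
  set x : WithLp 2 (H × H) := (WithLp.equiv 2 (H × H)).symm (Complex.I • g, g) with hx
  have cont : Continuous fun z : WithLp 2 (H × H) => (WithLp.equiv 2 (H × H) z).fst :=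
    continuous_fst.comp (WithLp.prodContinuousLinearEquiv 2 ℂ H H).continuous
  have h := (cont.tendsto (P x)).comp (hproj x)
  have hPx := key_proj hD hP hR g
  have hPnx := fun n => key_proj (hDn n) (hPn n) (hRn n) g
  simp only [Function.comp_def, hx, hPx, hPnx, Equiv.apply_symm_apply] at h
  exact h
end
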